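/- For every z > 0 and every n ∈ ℕ, the n-th moment of the generalized inverse Gaussian distribution with parameters (1, z², 1/2) satisfies ∫_0^∞ xⁿ g₊(x; z) dx = (1/2ⁿ) · ((2n)!/n!) · q_n(z). -/

import Mathlib

/-- The generalized inverse Gaussian density with parameters `(ψ, χ, λ) = (1, z², +1/2)`:
`g₊(x; z) = (e^z / √(2π)) x^{-1/2} exp(-z²/(2x) - x/2)`. -/
noncomputable def gigPlus (z x : ℝ) : ℝ :=
  Real.exp z / Real.sqrt (2 * Real.pi) * x ^ (-(1 : ℝ) / 2) *
    Real.exp (-z ^ 2 / (2 * x) - x / 2)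

/-- The Bessel polynomial `q_n(z) = ∑_{l=0}^n [C(n,l)/C(2n,l)] (2z)^l / l!`. -/
noncomputable def besselQ (n : ℕ) (z : ℝ) : ℝ :=
  ∑ l ∈ Finset.range (n + 1),
    ((n.choose l : ℝ) / ((2 * n).choose l : ℝ)) * (2 * z) ^ l / (Nat.factorial l : ℝ)


open Real MeasureTheory Set Filter Topology

/-- `exp (-z^2/(2x) - b*x)` -/
noncomputable def Ef (z b x : ℝ) : ℝ := Real.exp (-z^2/(2*x) - b*x)

lemma Ef_tendsto_zero_at_zero (z b ν : ℝ) (hz : 0 < z) :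
    Tendsto (fun x => x ^ ν * Ef z b x) (𝓝[>] (0:ℝ)) (𝓝 0) := by
  have h1 : Tendsto (fun y : ℝ => y ^ (-ν) * Real.exp (-(z^2/2) * y)) atTop (𝓝 0) :=
    tendsto_rpow_mul_exp_neg_mul_atTop_nhds_zero _ _ (by positivity)
  have h2 : Tendsto (fun x : ℝ => (x⁻¹) ^ (-ν) * Real.exp (-(z^2/2) * x⁻¹)) (𝓝[>] (0:ℝ)) (𝓝 0) :=
    h1.comp tendsto_inv_nhdsGT_zero
  have h3 : Tendsto (fun x : ℝ => Real.exp (-b * x)) (𝓝[>] (0:ℝ)) (𝓝 1) := by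
    have : Continuous (fun x : ℝ => Real.exp (-b * x)) := by continuity
    have := this.tendsto 0
    simp only [mul_zero, Real.exp_zero] at this
    exact this.mono_left nhdsWithin_le_nhds
  have h4 := h2.mul h3
  rw [zero_mul] at h4
  refine h4.congr' ?_
  filter_upwards [self_mem_nhdsWithin] with x (hx : 0 < x)
  have hx0 : (0:ℝ) ≤ x := hx.le
  rw [Real.inv_rpow hx0, ← Real.rpow_neg hx0, neg_neg]
  rw [Ef, mul_assoc, ← Real.exp_add]
  congr 2
  field_simp
  ring

lemma Ef_tendsto_zero_atTop (z b ν : ℝ) (hb : 0 < b) :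
    Tendsto (fun x => x ^ ν * Ef z b x) atTop (𝓝 0) := by
  have h1 : Tendsto (fun x : ℝ => x ^ ν * Real.exp (-b * x)) atTop (𝓝 0) :=
    tendsto_rpow_mul_exp_neg_mul_atTop_nhds_zero _ _ hb
  refine squeeze_zero' ?_ ?_ h1
  · filter_upwards [eventually_gt_atTop (0:ℝ)] with x hx
    exact mul_nonneg (Real.rpow_nonneg hx.le _) (Real.exp_pos _).le
  · filter_upwards [eventually_gt_atTop (0:ℝ)] with x hx
    refine mul_le_mul_of_nonneg_left ?_ (Real.rpow_nonneg hx.le _)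
    rw [Ef]
    apply Real.exp_le_exp.2
    have h2 : 0 ≤ z^2/(2*x) := by positivity
    have h3 : -z^2/(2*x) = -(z^2/(2*x)) := by ring
    rw [h3]
    linarith

lemma Ef_continuousOn (z b : ℝ) : ContinuousOn (Ef z b) (Ioi (0:ℝ)) := by
  unfold Ef
  apply Real.continuous_exp.comp_continuousOn
  apply ContinuousOn.sub
  · apply ContinuousOn.div continuousOn_const (by fun_prop)
    intro x hx
    have : (0:ℝ) < x := hx
    positivity
  · fun_prop

lemma rpow_mul_Ef_continuousOn (z b ν : ℝ) :
    ContinuousOn (fun x => x ^ ν * Ef z b x) (Ioi (0:ℝ)) := by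
  apply ContinuousOn.mul ?_ (Ef_continuousOn z b)
  intro x hx
  exact (Real.continuousAt_rpow_const x ν (Or.inl (ne_of_gt hx))).continuousWithinAt

lemma bounded_of_tendsto {f : ℝ → ℝ} (hc : ContinuousOn f (Ioi (0:ℝ)))
    (h0 : Tendsto f (𝓝[>] (0:ℝ)) (𝓝 0)) (hT : Tendsto f atTop (𝓝 0)) :
    ∃ C, ∀ x ∈ Ioi (0:ℝ), |f x| ≤ C := by
  have h1 : ∀ᶠ x in atTop, |f x| ≤ 1 := by
    have := (Metric.tendsto_nhds.mp hT) 1 one_pos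
    filter_upwards [this] with x hx
    rw [Real.dist_eq, sub_zero] at hx
    exact hx.le
  obtain ⟨A, hA⟩ := eventually_atTop.mp h1
  have h2 : ∀ᶠ x in 𝓝[>] (0:ℝ), |f x| ≤ 1 := by
    have := (Metric.tendsto_nhds.mp h0) 1 one_pos
    filter_upwards [this] with x hx
    rw [Real.dist_eq, sub_zero] at hx
    exact hx.le
  rw [eventually_nhdsWithin_iff] at h2
  obtain ⟨ε, hε0, hε⟩ := Metric.eventually_nhds_iff.mp h2
  obtain ⟨C, hC⟩ := (isCompact_Icc (a := ε/2) (b := max A (ε/2))).exists_bound_of_continuousOn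
    (hc.mono (fun x hx => lt_of_lt_of_le (by positivity) hx.1))
  refine ⟨max C 1, fun x hx => ?_⟩
  rcases le_or_gt x (ε/2) with h | h
  · have : |f x| ≤ 1 := hε (by rw [Real.dist_eq, sub_zero]; rw [abs_of_pos hx]; linarith) hx
    exact le_trans this (le_max_right _ _)
  · rcases le_or_gt A x with h' | h'
    · exact le_trans (hA x h') (le_max_right _ _)
    · refine le_trans (hC x ⟨h.le, le_trans h'.le (le_max_left _ _)⟩) (le_max_left _ _)

lemma Ef_integrableOn (z ν : ℝ) (hz : 0 < z) :
    IntegrableOn (fun x => x ^ ν * Ef z (1/2) x) (Ioi (0:ℝ)) := by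
  obtain ⟨C, hC⟩ := bounded_of_tendsto (rpow_mul_Ef_continuousOn z (1/4) (ν + 1/2))
    (Ef_tendsto_zero_at_zero z (1/4) (ν + 1/2) hz)
    (Ef_tendsto_zero_atTop z (1/4) (ν + 1/2) (by norm_num))
  have hCnn : 0 ≤ C := le_trans (abs_nonneg _) (hC 1 (by norm_num))
  have hg : IntegrableOn (fun x : ℝ => C * (x ^ (-(1:ℝ)/2) * Real.exp (-(1/4) * x))) (Ioi 0) := by
    refine Integrable.const_mul ?_ _
    have := integrableOn_rpow_mul_exp_neg_mul_rpow
      (show (-1:ℝ) < -1/2 by norm_num) (show (0:ℝ) < 1 by norm_num) (show (0:ℝ) < 1/4 by norm_num)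
    refine this.congr_fun (fun x hx => ?_) measurableSet_Ioi
    beta_reduce
    rw [Real.rpow_one]
  refine Integrable.mono' hg ?_ ?_
  · apply ContinuousOn.aestronglyMeasurable (rpow_mul_Ef_continuousOn z (1/2) ν) measurableSet_Ioi
  · rw [ae_restrict_iff' measurableSet_Ioi]
    filter_upwards with x hx
    have hx0 : (0:ℝ) < x := hx
    have key : x ^ ν * Ef z (1/2) x
        = (x ^ (-(1:ℝ)/2) * Real.exp (-(1/4) * x)) * (x ^ (ν + 1/2) * Ef z (1/4) x) := by
      have e1 : x ^ ν = x ^ (-(1:ℝ)/2) * x ^ (ν + 1/2) := by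
        rw [← Real.rpow_add hx0]; norm_num
      have e2 : Real.exp (-z^2/(2*x) - 1/2*x)
          = Real.exp (-(1/4) * x) * Real.exp (-z^2/(2*x) - 1/4*x) := by
        rw [← Real.exp_add]; congr 1; ring
      rw [Ef, Ef, e1, e2]; ring
    have hEpos : 0 < Ef z (1/2) x := by rw [Ef]; exact Real.exp_pos _
    rw [Real.norm_eq_abs,
      abs_of_nonneg (mul_nonneg (Real.rpow_nonneg hx0.le _) hEpos.le), key]
    calc (x ^ (-(1:ℝ)/2) * Real.exp (-(1/4) * x)) * (x ^ (ν + 1/2) * Ef z (1/4) x)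
        ≤ (x ^ (-(1:ℝ)/2) * Real.exp (-(1/4) * x)) * C := by
          refine mul_le_mul_of_nonneg_left ?_
            (mul_nonneg (Real.rpow_nonneg hx0.le _) (Real.exp_pos _).le)
          have := hC x hx
          calc x ^ (ν + 1/2) * Ef z (1/4) x ≤ |x ^ (ν + 1/2) * Ef z (1/4) x| := le_abs_self _
          _ ≤ C := this
      _ = C * (x ^ (-(1:ℝ)/2) * Real.exp (-(1/4) * x)) := by ring

lemma hasDerivAt_rpow_Ef (z ν : ℝ) {x : ℝ} (hx0 : 0 < x) :
    HasDerivAt (fun x => x ^ ν * Ef z (1/2) x)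
      (ν * (x ^ (ν-1) * Ef z (1/2) x) + z^2/2 * (x ^ (ν-2) * Ef z (1/2) x)
        - 1/2 * (x ^ ν * Ef z (1/2) x)) x := by
  have hxne : x ≠ 0 := ne_of_gt hx0
  have h1 : HasDerivAt (fun x : ℝ => x ^ ν) (ν * x ^ (ν - 1)) x :=
    Real.hasDerivAt_rpow_const (Or.inl hxne)
  have h2 : HasDerivAt (fun x : ℝ => -z^2/(2*x) - 1/2*x) (z^2/(2*x^2) - 1/2) x := by
    have e : (fun x : ℝ => -z^2/(2*x) - 1/2*x) = fun x => (-z^2/2) * x⁻¹ - 1/2 * x := by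
      funext y; ring
    rw [e]
    have h3 : HasDerivAt (fun x : ℝ => (-z^2/2) * x⁻¹ - 1/2 * x)
        ((-z^2/2) * (-(x^2)⁻¹) - 1/2 * 1) x :=
      ((hasDerivAt_inv hxne).const_mul _).sub ((hasDerivAt_id x).const_mul (1/2))
    convert h3 using 1
    field_simp
  have h4 : HasDerivAt (fun x => Ef z (1/2) x) (Ef z (1/2) x * (z^2/(2*x^2) - 1/2)) x := by
    have := h2.exp
    simpa [Ef] using this
  have h5 := h1.mul h4
  refine h5.congr_deriv ?_
  have e1 : x ^ (ν - 2) = x ^ ν / x ^ (2:ℕ) := by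
    rw [Real.rpow_sub hx0, show (2:ℝ) = ((2:ℕ):ℝ) by norm_num, Real.rpow_natCast]
  rw [e1]
  field_simp
  ring

lemma Ef_recurrence (z ν : ℝ) (hz : 0 < z) :
    ∫ x in Ioi (0:ℝ), x ^ ν * Ef z (1/2) x
      = 2 * ν * (∫ x in Ioi (0:ℝ), x ^ (ν-1) * Ef z (1/2) x)
        + z^2 * ∫ x in Ioi (0:ℝ), x ^ (ν-2) * Ef z (1/2) x := by
  set F : ℝ → ℝ := fun x => if x ≤ 0 then 0 else x ^ ν * Ef z (1/2) x with hF
  set f' : ℝ → ℝ := fun x => ν * (x ^ (ν-1) * Ef z (1/2) x)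
      + z^2/2 * (x ^ (ν-2) * Ef z (1/2) x) - 1/2 * (x ^ ν * Ef z (1/2) x) with hf'
  have hF0 : F 0 = 0 := by rw [hF]; simp
  have hFval : ∀ x : ℝ, 0 < x → F x = x ^ ν * Ef z (1/2) x := fun x hx => if_neg (not_le.2 hx)
  have hcont : ContinuousWithinAt F (Ici 0) 0 := by
    have hsplit : (𝓝[Ici (0:ℝ)] 0) = 𝓝[>] (0:ℝ)  ⊔ 𝓝[{0}] 0 := by
      rw [← nhdsWithin_union, Set.Ioi_union_left]
    unfold ContinuousWithinAt
    rw [hF0, hsplit, tendsto_sup]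
    constructor
    · refine (Ef_tendsto_zero_at_zero z (1/2) ν hz).congr' ?_
      filter_upwards [self_mem_nhdsWithin] with x (hx : 0 < x)
      exact (hFval x hx).symm
    · rw [nhdsWithin_singleton]
      have := tendsto_pure_nhds F 0
      rwa [hF0] at this
  have hderiv : ∀ x ∈ Ioi (0:ℝ), HasDerivAt F (f' x) x := by
    intro x hx
    have hx0 : (0:ℝ) < x := hx
    refine (hasDerivAt_rpow_Ef z ν hx0).congr_of_eventuallyEq ?_
    filter_upwards [IsOpen.mem_nhds isOpen_Ioi hx] with y (hy : 0 < y)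
    exact hFval y hy
  have hint1 := Ef_integrableOn z (ν-1) hz
  have hint2 := Ef_integrableOn z (ν-2) hz
  have hint3 := Ef_integrableOn z ν hz
  have hf'int : IntegrableOn f' (Ioi (0:ℝ)) :=
    ((hint1.const_mul ν).add (hint2.const_mul (z^2/2))).sub (hint3.const_mul (1/2))
  have htop : Tendsto F atTop (𝓝 0) := by
    refine (Ef_tendsto_zero_atTop z (1/2) ν (by norm_num)).congr' ?_
    filter_upwards [eventually_gt_atTop (0:ℝ)] with x hx
    exact (hFval x hx).symm
  have key := integral_Ioi_of_hasDerivAt_of_tendsto hcont hderiv hf'int htop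
  rw [hF0, sub_zero] at key
  have hsplit : ∫ x in Ioi (0:ℝ), f' x
      = ν * (∫ x in Ioi (0:ℝ), x ^ (ν-1) * Ef z (1/2) x)
        + z^2/2 * (∫ x in Ioi (0:ℝ), x ^ (ν-2) * Ef z (1/2) x)
        - 1/2 * (∫ x in Ioi (0:ℝ), x ^ ν * Ef z (1/2) x) := by
    have h1 : IntegrableOn (fun x => ν * (x ^ (ν-1) * Ef z (1/2) x)) (Ioi (0:ℝ)) :=
      hint1.const_mul ν
    have h2 : IntegrableOn (fun x => z^2/2 * (x ^ (ν-2) * Ef z (1/2) x)) (Ioi (0:ℝ)) :=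
      hint2.const_mul (z^2/2)
    have h3 : IntegrableOn (fun x => 1/2 * (x ^ ν * Ef z (1/2) x)) (Ioi (0:ℝ)) :=
      hint3.const_mul (1/2)
    have hadd : IntegrableOn (fun x => ν * (x ^ (ν-1) * Ef z (1/2) x)
        + z^2/2 * (x ^ (ν-2) * Ef z (1/2) x)) (Ioi (0:ℝ)) := h1.add h2
    rw [hf']
    rw [integral_sub hadd h3, integral_add h1 h2,
      integral_const_mul, integral_const_mul, integral_const_mul]
  rw [key] at hsplit
  linear_combination 2 * hsplit

noncomputable def Gg (u : ℝ) : ℝ := Real.exp (-u^2/2)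

lemma Gg_eq : Gg = fun x : ℝ => Real.exp (-(1/2) * x^2) := by
  funext u; unfold Gg; congr 1; ring

lemma Gg_integrable : Integrable Gg := by
  rw [Gg_eq]; exact integrable_exp_neg_mul_sq (by norm_num)

lemma Gg_integral : ∫ u, Gg u = Real.sqrt (2*Real.pi) := by
  rw [Gg_eq, integral_gaussian, show Real.pi / (1/2) = 2*Real.pi by ring]

lemma Gg_even (u : ℝ) : Gg (-u) = Gg u := by unfold Gg; rw [neg_pow]; norm_num

lemma Gg_pos (u : ℝ) : 0 < Gg u := Real.exp_pos _

lemma phi_hasDeriv (z : ℝ) {t : ℝ} (ht : 0 < t) :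
    HasDerivAt (fun t : ℝ => t - z/t) (1 + z/t^2) t := by
  have h1 : HasDerivAt (fun t : ℝ => z/t) (z * (-(t^2)⁻¹)) t := by
    have := (hasDerivAt_inv (ne_of_gt ht)).const_mul z
    refine this.congr_deriv rfl |>.congr_of_eventuallyEq ?_
    filter_upwards with y; rw [div_eq_mul_inv]
  have h2 := (hasDerivAt_id t).sub h1
  refine h2.congr_deriv ?_
  field_simp
  ring

lemma phi_injOn (z : ℝ) (hz : 0 < z) : InjOn (fun t : ℝ => t - z/t) (Ioi 0) := by
  have : StrictMonoOn (fun t : ℝ => t - z/t) (Ioi 0) := by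
    intro a ha b hb hab
    have ha' : (0:ℝ) < a := ha
    have hb' : (0:ℝ) < b := hb
    have : z/b < z/a := div_lt_div_of_pos_left hz ha' hab
    simp only
    linarith
  exact this.injOn

lemma phi_image (z : ℝ) (hz : 0 < z) : (fun t : ℝ => t - z/t) '' Ioi 0 = univ := by
  apply eq_univ_of_forall
  intro y
  set s := Real.sqrt (y^2 + 4*z) with hs
  have hs2 : s^2 = y^2 + 4*z := Real.sq_sqrt (by positivity)
  have hsy : |y| < s := by
    rw [hs, ← Real.sqrt_sq_eq_abs]
    exact Real.sqrt_lt_sqrt (sq_nonneg y) (by linarith)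
  have hy1 : -y < s := by
    rcases abs_lt.mp hsy with ⟨h1, _⟩; linarith
  have ht : (0:ℝ) < (y + s)/2 := by linarith
  refine ⟨(y+s)/2, ht, ?_⟩
  have hne : y + s ≠ 0 := by linarith
  show (y+s)/2 - z/((y+s)/2) = y
  field_simp
  ring_nf
  nlinarith [hs2]

lemma sq_image_Ioi : (fun t : ℝ => t^2) '' Ioi (0:ℝ) = Ioi 0 := by
  ext y
  constructor
  · rintro ⟨t, ht, rfl⟩
    have : (0:ℝ) < t := ht
    exact pow_pos this 2
  · intro hy
    have hy' : (0:ℝ) < y := hy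
    exact ⟨Real.sqrt y, Real.sqrt_pos.2 hy', Real.sq_sqrt hy'.le⟩

lemma sq_injOn : InjOn (fun t : ℝ => t^2) (Ioi (0:ℝ)) := by
  intro a ha b hb h
  have ha' : (0:ℝ) < a := ha
  have hb' : (0:ℝ) < b := hb
  simp only at h
  have h2 : (a - b) * (a + b) = 0 := by linear_combination h
  rcases mul_eq_zero.mp h2 with h3 | h3
  · linarith
  · linarith

lemma zdiv_image (z : ℝ) (hz : 0 < z) : (fun t : ℝ => z/t) '' Ioi 0 = Ioi 0 := by
  ext y
  constructor
  · rintro ⟨t, ht, rfl⟩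
    have : (0:ℝ) < t := ht
    exact div_pos hz this
  · intro hy
    have hy' : (0:ℝ) < y := hy
    refine ⟨z/y, div_pos hz hy', ?_⟩
    field_simp

lemma zdiv_injOn (z : ℝ) (hz : 0 < z) : InjOn (fun t : ℝ => z/t) (Ioi 0) := by
  intro a ha b hb h
  have ha' : (0:ℝ) < a := ha
  have hb' : (0:ℝ) < b := hb
  simp only at h
  field_simp at h
  exact h.symm

lemma zdiv_hasDeriv (z : ℝ) {t : ℝ} (ht : 0 < t) :
    HasDerivAt (fun t : ℝ => z/t) (-(z/t^2)) t := by
  have h1 := (hasDerivAt_inv (ne_of_gt ht)).const_mul z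
  have e : (fun t : ℝ => z/t) = fun t : ℝ => z * t⁻¹ := by
    funext y; rw [div_eq_mul_inv]
  rw [e]
  refine h1.congr_deriv ?_
  field_simp

lemma phiG_cont (z : ℝ) : ContinuousOn (fun t : ℝ => Gg (t - z/t)) (Ioi 0) := by
  unfold Gg
  apply Real.continuous_exp.comp_continuousOn
  apply ContinuousOn.div ?_ continuousOn_const (fun x _ => two_ne_zero)
  apply ContinuousOn.neg
  apply ContinuousOn.pow
  apply ContinuousOn.sub continuousOn_id
  exact ContinuousOn.div continuousOn_const continuousOn_id (fun x hx => ne_of_gt hx)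

lemma stepC (z : ℝ) (hz : 0 < z) :
    ∫ u, Gg u = ∫ t in Ioi (0:ℝ), (1 + z/t^2) * Gg (t - z/t) := by
  have h := integral_image_eq_integral_abs_deriv_smul measurableSet_Ioi
    (fun t (ht : t ∈ Ioi (0:ℝ)) => (phi_hasDeriv z ht).hasDerivWithinAt)
    (phi_injOn z hz) Gg
  rw [phi_image z hz, setIntegral_univ] at h
  rw [h]
  refine setIntegral_congr_fun measurableSet_Ioi (fun t ht => ?_)
  have ht' : (0:ℝ) < t := ht
  have hpos : (0:ℝ) < 1 + z/t^2 := by positivity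
  rw [abs_of_pos hpos, smul_eq_mul]

lemma intOn_one_add (z : ℝ) (hz : 0 < z) :
    IntegrableOn (fun t : ℝ => (1 + z/t^2) * Gg (t - z/t)) (Ioi 0) := by
  have h := (integrableOn_image_iff_integrableOn_abs_deriv_smul measurableSet_Ioi
    (fun t (ht : t ∈ Ioi (0:ℝ)) => (phi_hasDeriv z ht).hasDerivWithinAt)
    (phi_injOn z hz) Gg).mp
  rw [phi_image z hz] at h
  have h2 := h Gg_integrable.integrableOn
  refine h2.congr_fun (fun t ht => ?_) measurableSet_Ioi
  have ht' : (0:ℝ) < t := ht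
  have hpos : (0:ℝ) < 1 + z/t^2 := by positivity
  beta_reduce
  rw [abs_of_pos hpos, smul_eq_mul]

lemma intOn_Gphi (z : ℝ) (hz : 0 < z) :
    IntegrableOn (fun t : ℝ => Gg (t - z/t)) (Ioi 0) := by
  refine Integrable.mono' (intOn_one_add z hz) ?_ ?_
  · exact (phiG_cont z).aestronglyMeasurable measurableSet_Ioi
  · rw [ae_restrict_iff' measurableSet_Ioi]
    filter_upwards with t ht
    have ht' : (0:ℝ) < t := ht
    rw [Real.norm_eq_abs, abs_of_pos (Gg_pos _)]
    have h1 : (1:ℝ) ≤ 1 + z/t^2 := by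
      have : (0:ℝ) ≤ z/t^2 := by positivity
      linarith
    nlinarith [Gg_pos (t - z/t)]

lemma intOn_zdiv_Gphi (z : ℝ) (hz : 0 < z) :
    IntegrableOn (fun t : ℝ => z/t^2 * Gg (t - z/t)) (Ioi 0) := by
  refine Integrable.mono' (intOn_one_add z hz) ?_ ?_
  · apply ContinuousOn.aestronglyMeasurable ?_ measurableSet_Ioi
    apply ContinuousOn.mul ?_ (phiG_cont z)
    apply ContinuousOn.div continuousOn_const (by fun_prop)
      (fun x hx => by have : (0:ℝ) < x := hx; positivity)
  · rw [ae_restrict_iff' measurableSet_Ioi]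
    filter_upwards with t ht
    have ht' : (0:ℝ) < t := ht
    have h0 : (0:ℝ) ≤ z/t^2 := by positivity
    rw [Real.norm_eq_abs, abs_of_nonneg (mul_nonneg h0 (Gg_pos _).le)]
    nlinarith [Gg_pos (t - z/t)]

lemma stepB (z : ℝ) (hz : 0 < z) :
    ∫ t in Ioi (0:ℝ), Gg (t - z/t) = ∫ t in Ioi (0:ℝ), z/t^2 * Gg (t - z/t) := by
  have h := integral_image_eq_integral_abs_deriv_smul measurableSet_Ioi
    (fun t (ht : t ∈ Ioi (0:ℝ)) => (zdiv_hasDeriv z ht).hasDerivWithinAt)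
    (zdiv_injOn z hz) (fun s => Gg (s - z/s))
  rw [zdiv_image z hz] at h
  rw [h]
  refine setIntegral_congr_fun measurableSet_Ioi (fun t ht => ?_)
  have ht' : (0:ℝ) < t := ht
  have h0 : (0:ℝ) < z/t^2 := by positivity
  rw [abs_neg, abs_of_pos h0, smul_eq_mul]
  congr 1
  have e1 : z/t - z/(z/t) = -(t - z/t) := by
    field_simp
    ring
  rw [e1, Gg_even]

lemma Gphi_integral (z : ℝ) (hz : 0 < z) :
    ∫ t in Ioi (0:ℝ), Gg (t - z/t) = Real.sqrt (2*Real.pi) / 2 := by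
  have hC := stepC z hz
  have hB := stepB z hz
  have hsplit : ∫ t in Ioi (0:ℝ), (1 + z/t^2) * Gg (t - z/t)
      = (∫ t in Ioi (0:ℝ), Gg (t - z/t)) + ∫ t in Ioi (0:ℝ), z/t^2 * Gg (t - z/t) := by
    rw [← integral_add (intOn_Gphi z hz) (intOn_zdiv_Gphi z hz)]
    refine setIntegral_congr_fun measurableSet_Ioi (fun t ht => ?_)
    ring
  rw [hsplit, ← hB] at hC
  rw [Gg_integral] at hC
  linarith

lemma base_integral (z : ℝ) (hz : 0 < z) :
    ∫ x in Ioi (0:ℝ), x ^ (-(1:ℝ)/2) * Ef z (1/2) x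
      = Real.sqrt (2*Real.pi) * Real.exp (-z) := by
  have hderiv : ∀ t ∈ Ioi (0:ℝ), HasDerivWithinAt (fun t : ℝ => t^2) (2*t) (Ioi 0) t := by
    intro t ht
    have := hasDerivAt_pow 2 t
    simpa [mul_comm] using this.hasDerivWithinAt
  have h := integral_image_eq_integral_abs_deriv_smul measurableSet_Ioi hderiv sq_injOn
    (fun x => x ^ (-(1:ℝ)/2) * Ef z (1/2) x)
  rw [sq_image_Ioi] at h
  rw [h]
  have key : ∀ t ∈ Ioi (0:ℝ),
      |2*t| • ((t^2) ^ (-(1:ℝ)/2) * Ef z (1/2) (t^2))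
        = (2 * Real.exp (-z)) * Gg (t - z/t) := by
    intro t ht
    have ht' : (0:ℝ) < t := ht
    have e1 : ((t^2 : ℝ)) ^ (-(1:ℝ)/2) = t⁻¹ := by
      rw [← Real.rpow_natCast t 2, ← Real.rpow_mul ht'.le]
      norm_num [Real.rpow_neg_one]
    have e2 : Ef z (1/2) (t^2) = Real.exp (-z) * Gg (t - z/t) := by
      unfold Ef Gg
      rw [← Real.exp_add]
      congr 1
      field_simp
      ring
    rw [abs_of_pos (by positivity : (0:ℝ) < 2*t), e1, e2, smul_eq_mul]
    field_simp
  rw [setIntegral_congr_fun measurableSet_Ioi key, integral_const_mul,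
    Gphi_integral z hz]
  field_simp

lemma threehalf_integral (z : ℝ) (hz : 0 < z) :
    ∫ x in Ioi (0:ℝ), x ^ (-(3:ℝ)/2) * Ef z (1/2) x
      = Real.sqrt (2*Real.pi) * Real.exp (-z) / z := by
  have hz2 : (0:ℝ) < z^2 := by positivity
  have h := integral_image_eq_integral_abs_deriv_smul measurableSet_Ioi
    (fun t (ht : t ∈ Ioi (0:ℝ)) => (zdiv_hasDeriv (z^2) ht).hasDerivWithinAt)
    (zdiv_injOn (z^2) hz2) (fun u => u ^ (-(1:ℝ)/2) * Ef z (1/2) u)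
  rw [zdiv_image (z^2) hz2] at h
  rw [base_integral z hz] at h
  have key : ∀ x ∈ Ioi (0:ℝ),
      |(-(z^2/x^2))| • ((z^2/x) ^ (-(1:ℝ)/2) * Ef z (1/2) (z^2/x))
        = z * (x ^ (-(3:ℝ)/2) * Ef z (1/2) x) := by
    intro x hx
    have hx' : (0:ℝ) < x := hx
    have hq : (0:ℝ) < z^2/x := by positivity
    have e1 : ((z^2/x : ℝ)) ^ (-(1:ℝ)/2) = z⁻¹ * x ^ ((1:ℝ)/2) := by
      rw [show (-(1:ℝ)/2) = -(1/2) by norm_num, Real.rpow_neg hq.le,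
        Real.div_rpow (by positivity : (0:ℝ) ≤ z^2) hx'.le,
        show ((z:ℝ)^2) ^ ((1:ℝ)/2) = z by
          rw [← Real.rpow_natCast z 2, ← Real.rpow_mul hz.le]; norm_num,
        inv_div, div_eq_mul_inv, mul_comm]
    have e2 : Ef z (1/2) (z^2/x) = Ef z (1/2) x := by
      unfold Ef
      congr 1
      field_simp
      ring
    have e3 : x ^ (-(3:ℝ)/2) = x ^ ((1:ℝ)/2) / x^2 := by
      rw [← Real.rpow_natCast x 2, ← Real.rpow_sub hx']
      norm_num
    rw [abs_neg, abs_of_pos (by positivity : (0:ℝ) < z^2/x^2), e1, e2, e3, smul_eq_mul]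
    field_simp
  rw [setIntegral_congr_fun measurableSet_Ioi key, integral_const_mul] at h
  rw [eq_div_iff (ne_of_gt hz), mul_comm _ z, ← h]

/-- Coefficient `d m l = C(m,l) (m+l)! / (m! 2^l)`. -/
noncomputable def dd (m l : ℕ) : ℝ := (m.choose l : ℝ) * (Nat.factorial (m+l) : ℝ)
  / ((Nat.factorial m : ℝ) * 2^l)

lemma dd_zero (m : ℕ) : dd m 0 = 1 := by
  unfold dd
  simp [Nat.factorial_ne_zero]

lemma dd_of_gt {m l : ℕ} (h : m < l) : dd m l = 0 := by
  unfold dd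
  rw [Nat.choose_eq_zero_of_lt h]
  simp

lemma dd_rec (n k : ℕ) (hk : k ≤ n + 1) :
    dd (n+2) (k+1) = (2*(n:ℝ)+3) * dd (n+1) k + dd n (k+1) := by
  rcases Nat.lt_or_ge k n with hA | hB
  · -- case k + 1 ≤ n
    obtain ⟨j, rfl⟩ : ∃ j, n = k+1+j := ⟨n-(k+1), by omega⟩
    unfold dd
    rw [Nat.cast_choose ℝ (by omega : k+1 ≤ k+1+j+2),
        Nat.cast_choose ℝ (by omega : k ≤ k+1+j+1),
        Nat.cast_choose ℝ (by omega : k+1 ≤ k+1+j)]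
    rw [show k+1+j+2-(k+1) = j+2 from by omega,
        show k+1+j+1-k = j+2 from by omega,
        show k+1+j-(k+1) = j from by omega]
    have hf1 : (Nat.factorial (k+1+j+2+(k+1)) : ℝ)
        = ((2*k+j+4 : ℕ) : ℝ) * ((2*k+j+3 : ℕ) : ℝ) * (Nat.factorial (k+1+j+1+k) : ℝ) := by
      rw [show k+1+j+2+(k+1) = (k+1+j+1+k) + 1 + 1 from by omega]
      rw [Nat.factorial_succ, Nat.factorial_succ]
      push_cast
      ring
    have hf2 : (Nat.factorial (k+1+j+(k+1)) : ℝ) = (Nat.factorial (k+1+j+1+k) : ℝ) := by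
      rw [show k+1+j+(k+1) = k+1+j+1+k from by omega]
    have hf3 : (Nat.factorial (j+2) : ℝ)
        = ((j+2 : ℕ) : ℝ) * ((j+1 : ℕ) : ℝ) * (Nat.factorial j : ℝ) := by
      rw [Nat.factorial_succ, Nat.factorial_succ]
      push_cast
      ring
    have hf4 : (Nat.factorial (k+1) : ℝ) = ((k+1 : ℕ) : ℝ) * (Nat.factorial k : ℝ) := by
      rw [Nat.factorial_succ]; push_cast; ring
    have hf5 : (Nat.factorial (k+1+j+2) : ℝ)
        = ((k+j+3 : ℕ) : ℝ) * ((k+j+2 : ℕ) : ℝ) * (Nat.factorial (k+1+j) : ℝ) := by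
      rw [show k+1+j+2 = (k+1+j) + 1 + 1 from by omega]
      rw [Nat.factorial_succ, Nat.factorial_succ]
      push_cast
      ring
    have hf6 : (Nat.factorial (k+1+j+1) : ℝ)
        = ((k+j+2 : ℕ) : ℝ) * (Nat.factorial (k+1+j) : ℝ) := by
      rw [show k+1+j+1 = (k+1+j) + 1 from by omega, Nat.factorial_succ]
      push_cast
      ring
    rw [hf1, hf2, hf3, hf4, hf5, hf6]
    have h1 : (Nat.factorial (k+1+j+1+k) : ℝ) ≠ 0 := Nat.cast_ne_zero.2 (Nat.factorial_ne_zero _)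
    have h2 : (Nat.factorial k : ℝ) ≠ 0 := Nat.cast_ne_zero.2 (Nat.factorial_ne_zero _)
    have h3 : (Nat.factorial j : ℝ) ≠ 0 := Nat.cast_ne_zero.2 (Nat.factorial_ne_zero _)
    have h4 : (Nat.factorial (k+1+j) : ℝ) ≠ 0 := Nat.cast_ne_zero.2 (Nat.factorial_ne_zero _)
    have h5 : (2:ℝ)^k ≠ 0 := by positivity
    push_cast
    field_simp
    ring
  · rcases Nat.eq_or_lt_of_le hB with hk1 | hk2
    · -- k = n
      subst hk1
      unfold dd
      rw [Nat.choose_eq_zero_of_lt (by omega : n < n+1), Nat.choose_succ_self_right,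
        Nat.choose_succ_self_right]
      have hf1 : (Nat.factorial (n+2+(n+1)) : ℝ)
          = ((2*n+3 : ℕ) : ℝ) * ((2*n+2 : ℕ) : ℝ) * (Nat.factorial (n+1+n) : ℝ) := by
        rw [show n+2+(n+1) = (n+1+n) + 1 + 1 from by omega]
        rw [Nat.factorial_succ, Nat.factorial_succ]
        push_cast
        ring
      have hf2 : (Nat.factorial (n+2) : ℝ)
          = ((n+2 : ℕ) : ℝ) * (Nat.factorial (n+1) : ℝ) := by
        rw [Nat.factorial_succ]; push_cast; ring
      rw [hf1, hf2]
      have h1 : (Nat.factorial (n+1+n) : ℝ) ≠ 0 := Nat.cast_ne_zero.2 (Nat.factorial_ne_zero _)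
      have h2 : (Nat.factorial (n+1) : ℝ) ≠ 0 := Nat.cast_ne_zero.2 (Nat.factorial_ne_zero _)
      have h5 : (2:ℝ)^n ≠ 0 := by positivity
      push_cast
      field_simp
      ring
    · -- k = n + 1
      have : k = n+1 := by omega
      subst this
      unfold dd
      rw [Nat.choose_eq_zero_of_lt (by omega : n < n+1+1), Nat.choose_self, Nat.choose_self]
      have hf1 : (Nat.factorial (n+2+(n+2)) : ℝ)
          = ((2*n+4 : ℕ) : ℝ) * ((2*n+3 : ℕ) : ℝ) * (Nat.factorial (n+1+(n+1)) : ℝ) := by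
        rw [show n+2+(n+2) = (n+1+(n+1)) + 1 + 1 from by omega]
        rw [Nat.factorial_succ, Nat.factorial_succ]
        push_cast
        ring
      have hf2 : (Nat.factorial (n+2) : ℝ)
          = ((n+2 : ℕ) : ℝ) * (Nat.factorial (n+1) : ℝ) := by
        rw [Nat.factorial_succ]; push_cast; ring
      rw [hf1, hf2]
      have h1 : (Nat.factorial (n+1+(n+1)) : ℝ) ≠ 0 := Nat.cast_ne_zero.2 (Nat.factorial_ne_zero _)
      have h2 : (Nat.factorial (n+1) : ℝ) ≠ 0 := Nat.cast_ne_zero.2 (Nat.factorial_ne_zero _)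
      have h5 : (2:ℝ)^(n+1) ≠ 0 := by positivity
      push_cast
      field_simp
      ring

noncomputable def Rr (n : ℕ) (z : ℝ) : ℝ := ∑ l ∈ Finset.range (n+1), dd n l * z^(n-l)

lemma Rr_zero (z : ℝ) : Rr 0 z = 1 := by
  unfold Rr
  simp [dd_zero]

lemma Rr_one (z : ℝ) : Rr 1 z = z + 1 := by
  unfold Rr dd
  rw [Finset.sum_range_succ, Finset.sum_range_succ, Finset.sum_range_zero]
  norm_num [Nat.factorial]

lemma Rr_rec (n : ℕ) (z : ℝ) :
    Rr (n+2) z = (2*(n:ℝ)+3) * Rr (n+1) z + z^2 * Rr n z := by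
  have hL : Rr (n+2) z
      = (∑ l ∈ Finset.range (n+2), dd (n+2) (l+1) * z^(n+1-l)) + z^(n+2) := by
    unfold Rr
    rw [Finset.sum_range_succ']
    congr 1
    · exact Finset.sum_congr rfl (fun l hl => by
        rw [show n+2-(l+1) = n+1-l from by omega])
    · rw [dd_zero, one_mul, Nat.sub_zero]
  have hsplit : ∀ l ∈ Finset.range (n+2),
      dd (n+2) (l+1) * z^(n+1-l)
        = (2*(n:ℝ)+3) * (dd (n+1) l * z^(n+1-l)) + dd n (l+1) * z^(n+1-l) := by
    intro l hl
    have hl' := Finset.mem_range.mp hl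
    rw [dd_rec n l (by omega)]
    ring
  rw [hL, Finset.sum_congr rfl hsplit, Finset.sum_add_distrib]
  have h1 : ∑ l ∈ Finset.range (n+2), (2*(n:ℝ)+3) * (dd (n+1) l * z^(n+1-l))
      = (2*(n:ℝ)+3) * Rr (n+1) z := by
    rw [Rr, Finset.mul_sum]
  have h2 : (∑ l ∈ Finset.range (n+2), dd n (l+1) * z^(n+1-l)) + z^(n+2)
      = z^2 * Rr n z := by
    rw [Rr, Finset.mul_sum]
    rw [Finset.sum_range_succ, Finset.sum_range_succ]
    rw [dd_of_gt (by omega : n < n+1), dd_of_gt (by omega : n < n+1+1)]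
    rw [show (∑ l ∈ Finset.range n, dd n (l+1) * z^(n+1-l))
        = ∑ l ∈ Finset.range n, z^2 * (dd n (l+1) * z^(n-(l+1))) from
      Finset.sum_congr rfl (fun l hl => by
        have hln : l < n := Finset.mem_range.mp hl
        rw [show n+1-l = (n-(l+1)) + 2 from by omega, pow_add]
        ring)]
    rw [show ∑ l ∈ Finset.range (n+1), z^2 * (dd n l * z^(n-l))
        = (∑ l ∈ Finset.range n, z^2 * (dd n (l+1) * z^(n-(l+1)))) + z^2 * (dd n 0 * z^n) from
      Finset.sum_range_succ' _ n]
    rw [dd_zero]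
    simp
    ring
  linarith [h1, h2]

lemma J_eq (z : ℝ) (hz : 0 < z) (n : ℕ) :
    ∫ x in Ioi (0:ℝ), x ^ ((n:ℝ) - 1/2) * Ef z (1/2) x
      = Real.sqrt (2*Real.pi) * Real.exp (-z) * Rr n z := by
  induction n using Nat.twoStepInduction with
  | zero =>
    rw [show ((0:ℕ):ℝ) - 1/2 = -(1:ℝ)/2 by norm_num, base_integral z hz, Rr_zero, mul_one]
  | one =>
    have h := Ef_recurrence z (1/2) hz
    rw [show (1:ℝ)/2 - 1 = -(1:ℝ)/2 by norm_num, show (1:ℝ)/2 - 2 = -(3:ℝ)/2 by norm_num,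
      base_integral z hz, threehalf_integral z hz] at h
    rw [show ((1:ℕ):ℝ) - 1/2 = (1:ℝ)/2 by norm_num, h, Rr_one]
    field_simp
    ring
  | more n ih2 ih1 =>
    rw [show ((n+2:ℕ):ℝ) - 1/2 = ((n:ℝ) + 2) - 1/2 by push_cast; ring]
    have h := Ef_recurrence z ((n:ℝ) + 2 - 1/2) hz
    rw [show (n:ℝ) + 2 - 1/2 - 1 = ((n+1:ℕ):ℝ) - 1/2 by push_cast; ring,
        show (n:ℝ) + 2 - 1/2 - 2 = ((n:ℕ):ℝ) - 1/2 by push_cast; ring] at h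
    rw [h, ih1, ih2, Rr_rec]
    push_cast
    ring

lemma Rr_eq_besselQ (n : ℕ) (z : ℝ) :
    Rr n z = (1 / 2 ^ n) * ((Nat.factorial (2 * n) : ℝ) / (Nat.factorial n : ℝ)) * besselQ n z := by
  unfold besselQ
  rw [Finset.mul_sum]
  unfold Rr
  rw [← Finset.sum_range_reflect]
  refine Finset.sum_congr rfl (fun l hl => ?_)
  have hln : l ≤ n := by have := Finset.mem_range.mp hl; omega
  rw [show n + 1 - 1 - l = n - l from by omega]
  rw [show n - (n - l) = l from by omega]
  unfold dd
  rw [Nat.choose_symm hln]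
  rw [show n + (n - l) = 2*n - l from by omega]
  rw [Nat.cast_choose ℝ (by omega : l ≤ 2*n)]
  have hpow : (2:ℝ)^(n-l) * 2^l = 2^n := by rw [← pow_add]; congr 1; omega
  have h1 : (Nat.factorial (2*n-l) : ℝ) ≠ 0 := Nat.cast_ne_zero.2 (Nat.factorial_ne_zero _)
  have h2 : (Nat.factorial l : ℝ) ≠ 0 := Nat.cast_ne_zero.2 (Nat.factorial_ne_zero _)
  have h3 : (Nat.factorial n : ℝ) ≠ 0 := Nat.cast_ne_zero.2 (Nat.factorial_ne_zero _)
  have h4 : (Nat.factorial (2*n) : ℝ) ≠ 0 := Nat.cast_ne_zero.2 (Nat.factorial_ne_zero _)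
  have h5 : (2:ℝ)^(n-l) ≠ 0 := by positivity
  have h6 : (2:ℝ)^l ≠ 0 := by positivity
  have h7 : (2:ℝ)^n ≠ 0 := by positivity
  rw [mul_pow]
  rw [show (2:ℝ)^(n-l) = 2^n / 2^l from by rw [eq_div_iff h6]; exact hpow]
  field_simp

theorem stmt_5 (z : ℝ) (hz : 0 < z) (n : ℕ) :
    ∫ x in Set.Ioi (0 : ℝ), x ^ n * gigPlus z x =
      (1 / 2 ^ n) * ((Nat.factorial (2 * n) : ℝ) / (Nat.factorial n : ℝ)) * besselQ n z := by
  have key : ∀ x ∈ Ioi (0:ℝ), x ^ n * gigPlus z x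
      = (Real.exp z / Real.sqrt (2*Real.pi)) * (x ^ ((n:ℝ) - 1/2) * Ef z (1/2) x) := by
    intro x hx
    have hx' : (0:ℝ) < x := hx
    unfold gigPlus Ef
    rw [show x ^ ((n:ℝ) - 1/2) = x^n * x ^ (-(1:ℝ)/2) by
      rw [← Real.rpow_natCast x n, ← Real.rpow_add hx']; congr 1; ring]
    rw [show -z^2/(2*x) - 1/2*x = -z^2/(2*x) - x/2 by ring]
    ring
  rw [setIntegral_congr_fun measurableSet_Ioi key, integral_const_mul, J_eq z hz n,
    ← Rr_eq_besselQ]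
  have hsq : Real.sqrt (2*Real.pi) ≠ 0 := by
    have := Real.pi_pos
    positivity
  have hexp : Real.exp z * Real.exp (-z) = 1 := by rw [← Real.exp_add]; simp
  calc Real.exp z / Real.sqrt (2*Real.pi) * (Real.sqrt (2*Real.pi) * Real.exp (-z) * Rr n z)
      = (Real.exp z * Real.exp (-z)) * (Real.sqrt (2*Real.pi) / Real.sqrt (2*Real.pi)) * Rr n z := by
        ring
    _ = Rr n z := by rw [hexp, div_self hsq]; ring
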